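/- A finite-index subgroup of a finitely presented group is finitely presented. -/

import Mathlib

/-- A group is finitely presented if it is isomorphic to a presented group on
finitely many generators with finitely many relations. -/
def Group.FinitelyPresented (G : Type*) [Group G] : Prop :=
  ∃ (n : ℕ) (rels : Set (FreeGroup (Fin n))), rels.Finite ∧
    Nonempty (PresentedGroup rels ≃* G)

/-- A finitely generated free group has finitely many basis elements. -/
lemma finite_of_freeGroup_fg {ι : Type*} (h : Group.FG (FreeGroup ι)) : Finite ι := by
  have h1 : Group.FG (Abelianization (FreeGroup ι)) :=
    @Group.fg_of_surjective _ _ _ _ h Abelianization.of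
      (fun x => Quotient.inductionOn' x fun g => ⟨g, rfl⟩)
  have h2 : AddGroup.FG (FreeAbelianGroup ι) := GroupFG.iff_add_fg.mp h1
  have h3 : AddGroup.FG (ι →₀ ℤ) := by
    haveI := h2
    exact AddGroup.fg_of_surjective (f := (FreeAbelianGroup.equivFinsupp ι).toAddMonoidHom)
      (FreeAbelianGroup.equivFinsupp ι).surjective
  have h4 : Module.Finite ℤ (ι →₀ ℤ) := Module.Finite.iff_addGroup_fg.mpr h3
  exact Module.Finite.finite_basis (Finsupp.basisSingleOne (R := ℤ) (ι := ι))

theorem fp_of_finiteIndex_subgroup {G : Type*} [Group G] (H : Subgroup G)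
    (hidx : H.FiniteIndex) (hG : Group.FinitelyPresented G) :
    Group.FinitelyPresented H := by
  classical
  obtain ⟨n, rels, hrels, ⟨e⟩⟩ := hG
  set N : Subgroup (FreeGroup (Fin n)) := Subgroup.normalClosure rels with hN
  let φ : FreeGroup (Fin n) →* G := e.toMonoidHom.comp (PresentedGroup.mk rels)
  have hφsurj : Function.Surjective φ := e.surjective.comp (PresentedGroup.mk_surjective rels)
  have hφker : φ.ker = N := by
    ext x
    have h1 : φ x = 1 ↔ PresentedGroup.mk rels x = 1 := by
      rw [show φ x = e (PresentedGroup.mk rels x) from rfl, EmbeddingLike.map_eq_one_iff]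
    rw [MonoidHom.mem_ker, h1]
    exact QuotientGroup.eq_one_iff x
  haveI hFfg : Group.FG (FreeGroup (Fin n)) :=
    Group.fg_iff.mpr ⟨Set.range FreeGroup.of, FreeGroup.closure_range_of _, Set.finite_range _⟩
  set K : Subgroup (FreeGroup (Fin n)) := H.comap φ with hK
  have hNK : N ≤ K := by
    intro x hx
    have hx1 : φ x = 1 := by rw [← MonoidHom.mem_ker, hφker]; exact hx
    show φ x ∈ H
    rw [hx1]; exact H.one_mem
  haveI hKfi : K.FiniteIndex :=
    ⟨by rw [Subgroup.index_comap_of_surjective H hφsurj]; exact hidx.index_ne_zero⟩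
  haveI : Group.FG K := Subgroup.fg_of_index_ne_zero K
  haveI : IsFreeGroup K := inferInstance
  haveI : Finite (IsFreeGroup.Generators K) := by
    apply finite_of_freeGroup_fg
    exact Group.fg_of_surjective (f := (IsFreeGroup.toFreeGroup K).toMonoidHom)
      (IsFreeGroup.toFreeGroup K).surjective
  obtain ⟨m, ⟨efin⟩⟩ := Finite.exists_equiv_fin (IsFreeGroup.Generators K)
  let eqv : FreeGroup (Fin m) ≃* K :=
    (FreeGroup.freeGroupCongr efin.symm).trans (IsFreeGroup.toFreeGroup K).symm
  -- the restricted surjection onto H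
  let φ' : K →* H := (φ.domRestrict K).codRestrict H (fun k => k.2)
  have hφ'surj : Function.Surjective φ' := by
    rintro ⟨h, hh⟩
    obtain ⟨f, rfl⟩ := hφsurj h
    exact ⟨⟨f, hh⟩, rfl⟩
  have hφ'ker : φ'.ker = N.subgroupOf K := by
    ext x
    rw [MonoidHom.mem_ker, Subgroup.mem_subgroupOf, ← hφker, MonoidHom.mem_ker, Subtype.ext_iff]
    exact Iff.rfl
  -- transversal
  let τ : FreeGroup (Fin n) ⧸ K → FreeGroup (Fin n) := fun q => (Quotient.out q)⁻¹
  have hτ : ∀ f : FreeGroup (Fin n), f * Quotient.out ((f⁻¹ : FreeGroup (Fin n)) : FreeGroup (Fin n) ⧸ K) ∈ K := by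
    intro f
    have h1 : ((f⁻¹ : FreeGroup (Fin n)) : FreeGroup (Fin n) ⧸ K) = ((Quotient.out ((f⁻¹ : FreeGroup (Fin n)) : FreeGroup (Fin n) ⧸ K) : FreeGroup (Fin n)) : FreeGroup (Fin n) ⧸ K) :=
      (QuotientGroup.out_eq' _).symm
    have := QuotientGroup.eq.mp h1
    simpa using this
  haveI : Finite (FreeGroup (Fin n) ⧸ K) := K.finite_quotient_of_finiteIndex
  haveI : Finite ↥rels := hrels.to_subtype
  have hmemS : ∀ (q : FreeGroup (Fin n) ⧸ K) (r : ↥rels), τ q * (r : FreeGroup (Fin n)) * (τ q)⁻¹ ∈ K := fun q r =>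
    hNK (Subgroup.normalClosure_normal.conj_mem _ (Subgroup.subset_normalClosure r.2) _)
  let S' : Set K :=
    Set.range (fun p : (FreeGroup (Fin n) ⧸ K) × ↥rels =>
      (⟨τ p.1 * (p.2 : FreeGroup (Fin n)) * (τ p.1)⁻¹, hmemS p.1 p.2⟩ : K))
  have hS'fin : S'.Finite := Set.finite_range _
  have key : N.subgroupOf K = Subgroup.normalClosure S' := by
    apply le_antisymm
    · intro x hx
      have hxN : (x : FreeGroup (Fin n)) ∈ N := hx
      have hmap : N ≤ (Subgroup.normalClosure S').map K.subtype := by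
        have hdef : N = Subgroup.closure (Group.conjugatesOfSet rels) := rfl
        rw [hdef, Subgroup.closure_le]
        intro b hb
        obtain ⟨r, hr, hconj⟩ := Group.mem_conjugatesOfSet_iff.mp hb
        obtain ⟨c, rfl⟩ := isConj_iff.mp hconj
        set q : FreeGroup (Fin n) ⧸ K := ((c⁻¹ : FreeGroup (Fin n)) : FreeGroup (Fin n) ⧸ K) with hq
        have hk : c * Quotient.out q ∈ K := hτ c
        set s0 : K := (⟨τ q * r * (τ q)⁻¹, hmemS q ⟨r, hr⟩⟩ : K) with hs0def
        have hs0 : s0 ∈ Subgroup.normalClosure S' :=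
          Subgroup.subset_normalClosure ⟨(q, ⟨r, hr⟩), rfl⟩
        have hconjmem :
            (⟨c * Quotient.out q, hk⟩ : K) * s0 * (⟨c * Quotient.out q, hk⟩ : K)⁻¹ ∈
              Subgroup.normalClosure S' :=
          Subgroup.normalClosure_normal.conj_mem _ hs0 _
        refine ⟨_, hconjmem, ?_⟩
        show (c * Quotient.out q) * (τ q * r * (τ q)⁻¹) * (c * Quotient.out q)⁻¹
            = c * r * c⁻¹
        simp only [τ]
        group
      obtain ⟨y, hy, hyx⟩ := hmap hxN
      have hxy : y = x := Subtype.ext hyx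
      rwa [← hxy]
    · apply Subgroup.normalClosure_le_normal
      rintro x ⟨p, rfl⟩
      show τ p.1 * (p.2 : FreeGroup (Fin n)) * (τ p.1)⁻¹ ∈ N
      exact Subgroup.normalClosure_normal.conj_mem _ (Subgroup.subset_normalClosure p.2.2) _
  -- transport to a free group on `Fin m`
  let ψ : FreeGroup (Fin m) →* H := φ'.comp eqv.toMonoidHom
  have hψsurj : Function.Surjective ψ := hφ'surj.comp eqv.surjective
  set SS : Set (FreeGroup (Fin m)) := (⇑eqv) ⁻¹' S' with hSS
  have hSSfin : SS.Finite := hS'fin.preimage eqv.injective.injOn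
  have hψker : Subgroup.normalClosure SS = ψ.ker := by
    rw [hSS, Subgroup.comap_normalClosure _ eqv, ← key, ← hφ'ker]
    exact MonoidHom.comap_ker _ _
  exact ⟨m, SS, hSSfin, ⟨(QuotientGroup.quotientMulEquivOfEq hψker).trans
    (QuotientGroup.quotientKerEquivOfSurjective ψ hψsurj)⟩⟩
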